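/- Let t ≥ 4 be an integer and let H be a nonempty subgraph of H_t with d(H) = m(H_t) and, among all such subgraphs, with the minimum possible number of vertices. Then for every two distinct vertices x, y ∈ V(H), every common neighbor of x and y in H_t belongs to V(H); that is, N_{H_t}(x) ∩ N_{H_t}(y) ⊆ V(H). -/

import Mathlib

abbrev GVert (r s : ℕ) := Unit ⊕ Fin s ⊕ Fin s × Fin r

def GRel (r s : ℕ) : GVert r s → GVert r s → Prop := fun a b =>
  match a, b with
  | Sum.inl _, Sum.inr (Sum.inr _) => True
  | Sum.inr (Sum.inl i), Sum.inr (Sum.inr p) => p.1 = i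
  | _, _ => False

/-- The graph `G_r(u; u_1, …, u_s)`: `s` copies of `K_{2,r}`, where `{u_i, u_i'}` is the
part of size 2 of the `i`-th copy, glued by identifying all `u_i'` to one vertex `u`.
Here `Sum.inl ()` is `u`, `Sum.inr (Sum.inl i)` is `u_i`, and `Sum.inr (Sum.inr (i, j))`
is the `j`-th vertex of the part of size `r` in the `i`-th copy. -/
def GStar (r s : ℕ) : SimpleGraph (GVert r s) := SimpleGraph.fromRel (GRel r s)

def htr (t : ℕ) : ℕ := (t - 1) / 2
def hts (t : ℕ) : ℕ := t - 1 - htr t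

abbrev HtV (t : ℕ) :=
  GVert (t - 1) (htr t) ⊕ GVert (hts t - 1) (hts t) ⊕ GVert (htr t - 1) (t - 2)

/-- For `r = ⌊(t-1)/2⌋`, `s = t - 1 - r`: the disjoint union of `G_{t-1}(u; u_1, …, u_r)`,
`G_{s-1}(v; v_1, …, v_s)` and `G_{r-1}(w; w_1, …, w_{t-2})`, joining `u` to
`v, v_1, …, v_s` and `v` to `w, w_1, …, w_{t-2}`. -/
def HtRel (t : ℕ) : HtV t → HtV t → Prop := fun a b =>
  match a, b with
  | Sum.inl x, Sum.inl y => GRel _ _ x y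
  | Sum.inr (Sum.inl x), Sum.inr (Sum.inl y) => GRel _ _ x y
  | Sum.inr (Sum.inr x), Sum.inr (Sum.inr y) => GRel _ _ x y
  | Sum.inl (Sum.inl _), Sum.inr (Sum.inl (Sum.inl _)) => True
  | Sum.inl (Sum.inl _), Sum.inr (Sum.inl (Sum.inr (Sum.inl _))) => True
  | Sum.inr (Sum.inl (Sum.inl _)), Sum.inr (Sum.inr (Sum.inl _)) => True
  | Sum.inr (Sum.inl (Sum.inl _)), Sum.inr (Sum.inr (Sum.inr (Sum.inl _))) => True
  | _, _ => False

/-- The graph `H_t`. -/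
def Ht (t : ℕ) : SimpleGraph (HtV t) := SimpleGraph.fromRel (HtRel t)

/-- The density `|E(H)|/|V(H)|` of a subgraph `H`. -/
noncomputable def subDensity {V : Type*} {G : SimpleGraph V} (H : G.Subgraph) : ℚ :=
  (H.edgeSet.ncard : ℚ) / (H.verts.ncard : ℚ)

/-- rank of a vertex -/
def rho {t : ℕ} : HtV t → ℕ
  | Sum.inl (Sum.inl _) => 1
  | Sum.inl (Sum.inr (Sum.inl _)) => 2
  | Sum.inl (Sum.inr (Sum.inr _)) => 3
  | Sum.inr (Sum.inl (Sum.inl _)) => 0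
  | Sum.inr (Sum.inl (Sum.inr (Sum.inl _))) => 2
  | Sum.inr (Sum.inl (Sum.inr (Sum.inr _))) => 3
  | Sum.inr (Sum.inr (Sum.inl _)) => 1
  | Sum.inr (Sum.inr (Sum.inr (Sum.inl _))) => 2
  | Sum.inr (Sum.inr (Sum.inr (Sum.inr _))) => 3

def slot {t : ℕ} (x : HtV t) : Fin 2 := if rho x ≤ 1 then 0 else 1

def partner {t : ℕ} : HtV t → Fin 2 → HtV t
  | Sum.inl (Sum.inl _), _ => Sum.inr (Sum.inl (Sum.inl ()))
  | Sum.inl (Sum.inr (Sum.inl _)), _ => Sum.inl (Sum.inl ())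
  | Sum.inl (Sum.inr (Sum.inr p)), k =>
      if k = 0 then Sum.inl (Sum.inl ()) else Sum.inl (Sum.inr (Sum.inl p.1))
  | Sum.inr (Sum.inl (Sum.inl _)), _ => Sum.inl (Sum.inl ())
  | Sum.inr (Sum.inl (Sum.inr (Sum.inl _))), _ => Sum.inl (Sum.inl ())
  | Sum.inr (Sum.inl (Sum.inr (Sum.inr p))), k =>
      if k = 0 then Sum.inr (Sum.inl (Sum.inl ())) else Sum.inr (Sum.inl (Sum.inr (Sum.inl p.1)))
  | Sum.inr (Sum.inr (Sum.inl _)), _ => Sum.inr (Sum.inl (Sum.inl ()))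
  | Sum.inr (Sum.inr (Sum.inr (Sum.inl _))), _ => Sum.inr (Sum.inl (Sum.inl ()))
  | Sum.inr (Sum.inr (Sum.inr (Sum.inr p))), k =>
      if k = 0 then Sum.inr (Sum.inr (Sum.inl ())) else Sum.inr (Sum.inr (Sum.inr (Sum.inl p.1)))

lemma adj_rho_ne {t : ℕ} {a b : HtV t} (h : (Ht t).Adj a b) : rho a ≠ rho b := by
  obtain ⟨hne, h | h⟩ := (SimpleGraph.fromRel_adj _ _ _).1 h <;>
  · rcases a with (⟨⟩|i|p) | (⟨⟩|i|p) | (⟨⟩|i|p) <;>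
    rcases b with (⟨⟩|i'|p') | (⟨⟩|i'|p') | (⟨⟩|i'|p') <;>
    simp_all [HtRel, GRel, rho]

lemma low_nbr {t : ℕ} {a b : HtV t} (h : (Ht t).Adj a b) (hr : rho b < rho a) :
    b = partner a (slot b) := by
  obtain ⟨hne, h | h⟩ := (SimpleGraph.fromRel_adj _ _ _).1 h <;>
  · rcases a with (⟨⟩|i|p) | (⟨⟩|i|p) | (⟨⟩|i|p) <;>
    rcases b with (⟨⟩|i'|p') | (⟨⟩|i'|p') | (⟨⟩|i'|p') <;>
    simp_all [HtRel, GRel, rho, partner, slot]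


noncomputable def hd {t : ℕ} (a b : HtV t) : HtV t × Fin 2 :=
  if rho a < rho b ∨ (rho a = rho b ∧ Encodable.encode a ≤ Encodable.encode b)
  then (b, slot a) else (a, slot b)

lemma hd_symm {t : ℕ} (a b : HtV t) : hd a b = hd b a := by
  unfold hd
  split_ifs with h1 h2 h2
  · have : a = b := by
      rcases h1 with h1 | ⟨he1, h1⟩ <;> rcases h2 with h2 | ⟨he2, h2⟩
      · omega
      · omega
      · omega
      · exact Encodable.encode_injective (le_antisymm h1 h2)
    subst this; rfl
  · rfl
  · rfl
  · push_neg at h1 h2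
    have he : rho a = rho b := le_antisymm h2.1 h1.1
    have e1 := h1.2 he
    have e2 := h2.2 he.symm
    have : a = b := Encodable.encode_injective (by omega)
    subst this; rfl

noncomputable def fEdge {t : ℕ} : Sym2 (HtV t) → HtV t × Fin 2 := Sym2.lift ⟨hd, hd_symm⟩

lemma fEdge_mk {t : ℕ} {a b : HtV t} (hr : rho b < rho a) : fEdge s(a, b) = (a, slot b) := by
  show hd a b = _
  unfold hd
  rw [if_neg]
  push_neg
  exact ⟨by omega, fun he => absurd he (by omega)⟩

lemma canon {t : ℕ} {H' : (Ht t).Subgraph} {a b : HtV t} (h : H'.Adj a b) :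
    ∃ c d, s(a, b) = s(c, d) ∧ H'.Adj c d ∧ rho d < rho c := by
  rcases lt_or_gt_of_ne (adj_rho_ne (H'.adj_sub h)) with hlt | hlt
  · exact ⟨b, a, Sym2.eq_swap, h.symm, hlt⟩
  · exact ⟨a, b, rfl, h, hlt⟩

lemma edge_lt {t : ℕ} (H' : (Ht t).Subgraph) (hne : H'.verts.Nonempty) :
    H'.edgeSet.ncard < 2 * H'.verts.ncard := by
  have hnpos : 0 < H'.verts.ncard := (Set.ncard_pos (Set.toFinite _)).2 hne
  by_cases hx : ∃ x0 ∈ H'.verts, rho x0 ≤ 2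
  · obtain ⟨x0, hx0v, hx0⟩ := hx
    set T : Set (HtV t × Fin 2) := (H'.verts ×ˢ (Set.univ : Set (Fin 2))) \ {(x0, 1)} with hT
    have hprod : (H'.verts ×ˢ (Set.univ : Set (Fin 2))).ncard = 2 * H'.verts.ncard := by
      rw [← Nat.card_coe_set_eq, Nat.card_congr (Equiv.Set.prod _ _), Nat.card_prod,
        Nat.card_coe_set_eq, Nat.card_coe_set_eq, Set.ncard_univ]
      simp [Nat.card_eq_fintype_card, Nat.mul_comm]
    have hmaps : ∀ e ∈ H'.edgeSet, fEdge e ∈ T := by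
      intro e
      refine Sym2.ind (fun a b he => ?_) e
      rw [SimpleGraph.Subgraph.mem_edgeSet] at he
      obtain ⟨c, d, hcd, hadj, hlt⟩ := canon he
      rw [hcd, fEdge_mk hlt]
      simp only [hT, Set.mem_diff, Set.mem_prod, Set.mem_univ, and_true,
        Set.mem_singleton_iff, Prod.mk.injEq, not_and]
      refine ⟨H'.edge_vert hadj, ?_⟩
      intro hc hs
      have hd1 : ¬ rho d ≤ 1 := by
        intro hle; rw [slot, if_pos hle] at hs; exact absurd hs (by decide)
      subst hc; omega
    have hinj : Set.InjOn fEdge H'.edgeSet := by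
      intro e he e' he' heq
      revert he he' heq
      refine Sym2.ind (fun a b => ?_) e
      refine Sym2.ind (fun a' b' => ?_) e'
      intro he he' heq
      rw [SimpleGraph.Subgraph.mem_edgeSet] at he he'
      obtain ⟨c, d, hcd, hadj, hlt⟩ := canon he
      obtain ⟨c', d', hcd', hadj', hlt'⟩ := canon he'
      rw [hcd, hcd', fEdge_mk hlt, fEdge_mk hlt'] at heq
      rw [Prod.mk.injEq] at heq
      obtain ⟨h1, h2⟩ := heq
      subst h1
      have hdd : d = d' := by
        rw [low_nbr (H'.adj_sub hadj) hlt, low_nbr (H'.adj_sub hadj') hlt', h2]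
      rw [hcd, hcd', hdd]
    have hle : H'.edgeSet.ncard ≤ T.ncard :=
      Set.ncard_le_ncard_of_injOn _ hmaps hinj (Set.toFinite _)
    have hTcard : T.ncard = 2 * H'.verts.ncard - 1 := by
      rw [hT, Set.ncard_diff_singleton_of_mem (Set.mk_mem_prod hx0v (Set.mem_univ _)), hprod]
    omega
  · push_neg at hx
    have hE : H'.edgeSet = ∅ := by
      ext e
      refine Sym2.ind (fun a b => ?_) e
      simp only [SimpleGraph.Subgraph.mem_edgeSet, Set.mem_empty_iff_false, iff_false]
      intro he
      have ha := hx a (H'.edge_vert he)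
      have hb := hx b (H'.edge_vert he.symm)
      have h3 : ∀ x : HtV t, rho x ≤ 3 := by
        intro x
        rcases x with (⟨⟩|i|p) | (⟨⟩|i|p) | (⟨⟩|i|p) <;> simp [rho]
      have := adj_rho_ne (H'.adj_sub he)
      have := h3 a; have := h3 b
      omega
    rw [hE]
    simpa using hnpos

theorem stmt_7 (t : ℕ) (ht : 4 ≤ t) (H : (Ht t).Subgraph) (hne : H.verts.Nonempty)
    (hmax : ∀ H' : (Ht t).Subgraph, H'.verts.Nonempty → subDensity H' ≤ subDensity H)
    (hmin : ∀ H' : (Ht t).Subgraph, H'.verts.Nonempty →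
      (∀ H'' : (Ht t).Subgraph, H''.verts.Nonempty → subDensity H'' ≤ subDensity H') →
      H.verts.ncard ≤ H'.verts.ncard) :
    ∀ x ∈ H.verts, ∀ y ∈ H.verts, x ≠ y →
      (Ht t).neighborSet x ∩ (Ht t).neighborSet y ⊆ H.verts := by
  intro x hx y hy hxy z hz
  by_contra hzH
  obtain ⟨hz1, hz2⟩ := hz
  have hxz : (Ht t).Adj x z := hz1
  have hyz : (Ht t).Adj y z := hz2
  have hzx : z ≠ x := fun h => hzH (h ▸ hx)
  have hzy : z ≠ y := fun h => hzH (h ▸ hy)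
  set H2 : (Ht t).Subgraph :=
    { verts := insert z H.verts
      Adj := fun a b => H.Adj a b ∨ (a = x ∧ b = z) ∨ (a = z ∧ b = x) ∨
        (a = y ∧ b = z) ∨ (a = z ∧ b = y)
      adj_sub := by
        rintro a b (h | ⟨rfl, rfl⟩ | ⟨rfl, rfl⟩ | ⟨rfl, rfl⟩ | ⟨rfl, rfl⟩)
        exacts [H.adj_sub h, hxz, hxz.symm, hyz, hyz.symm]
      edge_vert := by
        rintro a b (h | ⟨rfl, rfl⟩ | ⟨rfl, rfl⟩ | ⟨rfl, rfl⟩ | ⟨rfl, rfl⟩)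
        exacts [Set.mem_insert_of_mem _ (H.edge_vert h), Set.mem_insert_of_mem _ hx,
          Set.mem_insert _ _, Set.mem_insert_of_mem _ hy, Set.mem_insert _ _]
      symm := by
        constructor
        rintro a b (h | ⟨rfl, rfl⟩ | ⟨rfl, rfl⟩ | ⟨rfl, rfl⟩ | ⟨rfl, rfl⟩)
        · exact Or.inl h.symm
        · exact Or.inr (Or.inr (Or.inl ⟨rfl, rfl⟩))
        · exact Or.inr (Or.inl ⟨rfl, rfl⟩)
        · exact Or.inr (Or.inr (Or.inr (Or.inr ⟨rfl, rfl⟩)))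
        · exact Or.inr (Or.inr (Or.inr (Or.inl ⟨rfl, rfl⟩))) } with hH2
  have hv2 : H2.verts.ncard = H.verts.ncard + 1 := by
    show (insert z H.verts).ncard = _
    rw [Set.ncard_insert_of_notMem hzH (Set.toFinite _)]
  have hxzE : s(x, z) ∉ H.edgeSet := by
    intro h
    rw [SimpleGraph.Subgraph.mem_edgeSet] at h
    exact hzH (H.edge_vert h.symm)
  have hyzE : s(y, z) ∉ H.edgeSet := by
    intro h
    rw [SimpleGraph.Subgraph.mem_edgeSet] at h
    exact hzH (H.edge_vert h.symm)
  have hxyzE : s(x, z) ≠ s(y, z) := by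
    intro h
    rw [Sym2.eq_iff] at h
    rcases h with ⟨h1, -⟩ | ⟨h1, h2⟩
    · exact hxy h1
    · exact hzy h2
  have hE2 : H2.edgeSet = insert s(x, z) (insert s(y, z) H.edgeSet) := by
    ext e
    refine Sym2.ind (fun a b => ?_) e
    simp only [SimpleGraph.Subgraph.mem_edgeSet, Set.mem_insert_iff, Sym2.eq_iff]
    show (H.Adj a b ∨ _ ∨ _ ∨ _ ∨ _) ↔ _
    constructor
    · rintro (h | h | h | h | h)
      exacts [Or.inr (Or.inr h), Or.inl (Or.inl h), Or.inl (Or.inr h),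
        Or.inr (Or.inl (Or.inl h)), Or.inr (Or.inl (Or.inr h))]
    · rintro ((h | h) | (h | h) | h)
      exacts [Or.inr (Or.inl h), Or.inr (Or.inr (Or.inl h)),
        Or.inr (Or.inr (Or.inr (Or.inl h))), Or.inr (Or.inr (Or.inr (Or.inr h))), Or.inl h]
  have he2 : H2.edgeSet.ncard = H.edgeSet.ncard + 2 := by
    rw [hE2, Set.ncard_insert_of_notMem (by
        simp only [Set.mem_insert_iff]
        rintro (h | h)
        exacts [hxyzE h, hxzE h]) (Set.toFinite _),
      Set.ncard_insert_of_notMem hyzE (Set.toFinite _)]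
  have hlt := edge_lt H hne
  have hd2 := hmax H2 ⟨z, Set.mem_insert _ _⟩
  rw [subDensity, subDensity, hv2, he2] at hd2
  have hnpos : 0 < H.verts.ncard := (Set.ncard_pos (Set.toFinite _)).2 hne
  set e := H.edgeSet.ncard
  set n := H.verts.ncard
  rw [div_le_div_iff₀ (by positivity) (by exact_mod_cast hnpos)] at hd2
  have hd3 : (e + 2) * n ≤ e * (n + 1) := by exact_mod_cast hd2
  nlinarith
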